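/- arXiv:2306.03322 — 5 statements merged into one kernel-verified Lean document; each statement's English description precedes it below -/
import Mathlib

section
/- Let $F:\mathbb{R}^d\to\mathbb{R}$ be the average $F(x)=\frac1N\sum_{n=1}^N F_n(x)$ of $L_F$-smooth functions $F_n$, let $x_1,\dots,x_N\in\mathbb{R}^d$, $\bar{x}=\frac1N\sum_n x_n$, and let $\bar{m}\in\mathbb{R}^d$. Suppose $\alpha,\eta>0$ with $\alpha\eta L_F\le\tfrac12$ and $\bar{x}^+ = \bar{x} - \alpha\eta\bar{m}$. Then $F(\bar{x}^+) \le F(\bar{x}) - \frac{\alpha\eta}{2}\|\nabla F(\bar{x})\|^2 - \frac{\alpha\eta}{4}\|\bar{m}\|^2 + \alpha\eta\Big\|\bar{m} - \frac1N\sum_{n=1}^N \nabla F_n(x_n)\Big\|^2 + \alpha\eta L_F^2 \frac1N\sum_{n=1}^N\|x_n - \bar{x}\|^2$. -/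
open RealInnerProductSpace InnerProductSpace

/-- Descent lemma for a function with Lipschitz gradient. -/
theorem descent_lemma' {E : Type*} [NormedAddCommGroup E] [InnerProductSpace ℝ E]
    [CompleteSpace E] (f : E → ℝ) (L : ℝ) (hL : 0 ≤ L)
    (hdiff : Differentiable ℝ f)
    (hlip : ∀ a b, ‖gradient f a - gradient f b‖ ≤ L * ‖a - b‖)
    (x v : E) :
    f (x + v) ≤ f x + ⟪gradient f x, v⟫_ℝ + L / 2 * ‖v‖ ^ 2 := by
  have hgc : Continuous (gradient f) := by
    have : LipschitzWith ⟨L, hL⟩ (gradient f) :=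
      LipschitzWith.of_dist_le_mul fun a b => by
        rw [dist_eq_norm, dist_eq_norm]; exact hlip a b
    exact this.continuous
  set φ : ℝ → ℝ := fun t => ⟪gradient f (x + t • v), v⟫_ℝ with hφ
  have hlinec : Continuous fun t : ℝ => x + t • v := by continuity
  have hφc : Continuous φ := (hgc.comp hlinec).inner continuous_const
  have hderiv : ∀ t : ℝ, HasDerivAt (fun s : ℝ => f (x + s • v)) (φ t) t := by
    intro t
    have h1 : HasFDerivAt f (toDual ℝ E (gradient f (x + t • v))) (x + t • v) :=
      ((hdiff _).hasGradientAt).hasFDerivAt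
    have h2 : HasDerivAt (fun s : ℝ => x + s • v) v t := by
      simpa using ((hasDerivAt_id t).smul_const v).const_add x
    have := h1.comp_hasDerivAt t h2
    exact this
  have hFTC : ∫ t in (0:ℝ)..1, φ t = f (x + v) - f x := by
    have := intervalIntegral.integral_eq_sub_of_hasDerivAt
      (f := fun s : ℝ => f (x + s • v)) (f' := φ)
      (fun t _ => hderiv t) (hφc.intervalIntegrable 0 1)
    simpa using this
  have hmono : ∫ t in (0:ℝ)..1, φ t ≤ ∫ t in (0:ℝ)..1, (φ 0 + L * t * ‖v‖ ^ 2) := by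
    apply intervalIntegral.integral_mono_on zero_le_one
      (hφc.intervalIntegrable 0 1)
      ((by continuity : Continuous fun t : ℝ => φ 0 + L * t * ‖v‖ ^ 2).intervalIntegrable 0 1)
    intro t ht
    have key : φ t - φ 0 ≤ L * t * ‖v‖ ^ 2 := by
      have h1 : φ t - φ 0 = ⟪gradient f (x + t • v) - gradient f (x + (0:ℝ) • v), v⟫_ℝ := by
        rw [inner_sub_left]
      have h2 : ⟪gradient f (x + t • v) - gradient f (x + (0:ℝ) • v), v⟫_ℝ ≤
          ‖gradient f (x + t • v) - gradient f (x + (0:ℝ) • v)‖ * ‖v‖ :=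
        real_inner_le_norm _ _
      have h3 : ‖gradient f (x + t • v) - gradient f (x + (0:ℝ) • v)‖ ≤ L * (t * ‖v‖) := by
        have := hlip (x + t • v) (x + (0:ℝ) • v)
        have he : ‖(x + t • v) - (x + (0:ℝ) • v)‖ = t * ‖v‖ := by
          simp [norm_smul, abs_of_nonneg ht.1]
        rw [he] at this; exact this
      have h4 : ‖gradient f (x + t • v) - gradient f (x + (0:ℝ) • v)‖ * ‖v‖ ≤
          L * (t * ‖v‖) * ‖v‖ := mul_le_mul_of_nonneg_right h3 (norm_nonneg v)
      nlinarith [h1, h2, h4]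
    linarith
  have hval : ∫ t in (0:ℝ)..1, (φ 0 + L * t * ‖v‖ ^ 2) = φ 0 + L / 2 * ‖v‖ ^ 2 := by
    have he : (fun t : ℝ => φ 0 + L * t * ‖v‖ ^ 2) = fun t : ℝ => φ 0 + (L * ‖v‖ ^ 2) * t := by
      funext t; ring
    rw [he, intervalIntegral.integral_add intervalIntegrable_const
      (IntervalIntegrable.const_mul intervalIntegral.intervalIntegrable_id _),
      intervalIntegral.integral_const_mul, integral_id]
    simp; ring
  have hφ0 : φ 0 = ⟪gradient f x, v⟫_ℝ := by simp [hφ]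
  linarith [hFTC, hmono, hval, hφ0]

set_option maxHeartbeats 1000000

/-- Descent inequality for the average objective `F = (1/N)∑ₙ Fₙ` at the
averaged iterate `x̄`, with direction `m̄` and consensus-error penalty:
`F(x̄⁺) ≤ F(x̄) − (αη/2)‖∇F(x̄)‖² − (αη/4)‖m̄‖² + αη‖m̄ − (1/N)∑ₙ∇Fₙ(xₙ)‖²
  + αη L_F² (1/N)∑ₙ‖xₙ − x̄‖²`. -/
theorem stmt9 (dd N : ℕ) (hN : 0 < N)
    (Fn : Fin N → EuclideanSpace ℝ (Fin dd) → ℝ) (LF : ℝ)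
    (hdiff : ∀ n, Differentiable ℝ (Fn n))
    (hsmooth : ∀ n x y, ‖gradient (Fn n) x - gradient (Fn n) y‖ ≤ LF * ‖x - y‖)
    (F : EuclideanSpace ℝ (Fin dd) → ℝ)
    (hF : ∀ z, F z = (N : ℝ)⁻¹ * ∑ n, Fn n z)
    (α η : ℝ) (hα : 0 < α) (hη : 0 < η) (hstep : α * η * LF ≤ 1 / 2)
    (x : Fin N → EuclideanSpace ℝ (Fin dd)) (m : EuclideanSpace ℝ (Fin dd))
    (xbar : EuclideanSpace ℝ (Fin dd)) (hxbar : xbar = (N : ℝ)⁻¹ • ∑ n, x n) :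
    F (xbar - (α * η) • m) ≤
      F xbar - α * η / 2 * ‖gradient F xbar‖ ^ 2 - α * η / 4 * ‖m‖ ^ 2
        + α * η * ‖m - (N : ℝ)⁻¹ • ∑ n, gradient (Fn n) (x n)‖ ^ 2
        + α * η * LF ^ 2 * ((N : ℝ)⁻¹ * ∑ n, ‖x n - xbar‖ ^ 2) := by
  have hNR : (0:ℝ) < (N : ℝ) := Nat.cast_pos.mpr hN
  by_cases hdd : dd = 0
  · subst hdd
    haveI : Subsingleton (EuclideanSpace ℝ (Fin 0)) :=
      ⟨fun a b => by ext i; exact i.elim0⟩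
    have h0 : ∀ a : EuclideanSpace ℝ (Fin 0), ‖a‖ = 0 := fun a => by
      rw [Subsingleton.elim a 0, norm_zero]
    rw [Subsingleton.elim (xbar - (α * η) • m) xbar]
    simp [h0]
  · have hLF : 0 ≤ LF := by
      have h := hsmooth ⟨0, hN⟩ 0 (EuclideanSpace.single ⟨0, Nat.pos_of_ne_zero hdd⟩ (1:ℝ))
      have hb : ‖(0 : EuclideanSpace ℝ (Fin dd)) -
          EuclideanSpace.single ⟨0, Nat.pos_of_ne_zero hdd⟩ (1:ℝ)‖ = 1 := by
        rw [zero_sub, norm_neg, EuclideanSpace.norm_single]; norm_num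
      rw [hb, mul_one] at h
      exact le_trans (norm_nonneg _) h
    have hFe : F = fun z => (N : ℝ)⁻¹ * ∑ n, Fn n z := funext hF
    subst hFe
    set G : EuclideanSpace ℝ (Fin dd) → EuclideanSpace ℝ (Fin dd) :=
      fun z => (N : ℝ)⁻¹ • ∑ n, gradient (Fn n) z with hG
    have hgradF : ∀ z, HasGradientAt (fun z => (N : ℝ)⁻¹ * ∑ n, Fn n z) (G z) z := by
      intro z
      have h1 : HasFDerivAt (fun z => ∑ n, Fn n z)
          (∑ n, toDual ℝ (EuclideanSpace ℝ (Fin dd)) (gradient (Fn n) z)) z :=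
        HasFDerivAt.fun_sum fun n _ => ((hdiff n z).hasGradientAt).hasFDerivAt
      have h2 := h1.const_mul ((N : ℝ)⁻¹)
      have h3 : toDual ℝ (EuclideanSpace ℝ (Fin dd)) (G z) =
          (N : ℝ)⁻¹ • ∑ n, toDual ℝ (EuclideanSpace ℝ (Fin dd)) (gradient (Fn n) z) := by
        rw [hG]; simp
      exact hasGradientAt_iff_hasFDerivAt.mpr (h3 ▸ h2)
    have hGrad_eq : gradient (fun z => (N : ℝ)⁻¹ * ∑ n, Fn n z) = G :=
      gradient_eq fun z => hgradF z
    have hdF : Differentiable ℝ (fun z => (N : ℝ)⁻¹ * ∑ n, Fn n z) :=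
      fun z => (hgradF z).differentiableAt
    have hlipG : ∀ a b, ‖G a - G b‖ ≤ LF * ‖a - b‖ := by
      intro a b
      have he : G a - G b = (N : ℝ)⁻¹ • ∑ n, (gradient (Fn n) a - gradient (Fn n) b) := by
        rw [hG, ← smul_sub, ← Finset.sum_sub_distrib]
      rw [he, norm_smul, Real.norm_eq_abs, abs_of_pos (by positivity)]
      have h1 : ‖∑ n, (gradient (Fn n) a - gradient (Fn n) b)‖ ≤ (N : ℝ) * (LF * ‖a - b‖) := by
        refine (norm_sum_le _ _).trans ?_
        calc ∑ n : Fin N, ‖gradient (Fn n) a - gradient (Fn n) b‖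
            ≤ ∑ _n : Fin N, LF * ‖a - b‖ := Finset.sum_le_sum fun n _ => hsmooth n a b
          _ = (N : ℝ) * (LF * ‖a - b‖) := by
              rw [Finset.sum_const, Finset.card_univ, Fintype.card_fin, nsmul_eq_mul]
      calc (N : ℝ)⁻¹ * ‖∑ n, (gradient (Fn n) a - gradient (Fn n) b)‖
          ≤ (N : ℝ)⁻¹ * ((N : ℝ) * (LF * ‖a - b‖)) := by
            exact mul_le_mul_of_nonneg_left h1 (by positivity)
        _ = LF * ‖a - b‖ := by field_simp
    have hdesc := descent_lemma' (fun z => (N : ℝ)⁻¹ * ∑ n, Fn n z) LF hLF hdF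
      (by rw [hGrad_eq]; exact hlipG) xbar ((-(α * η)) • m)
    rw [hGrad_eq] at hdesc ⊢
    have hx : xbar + (-(α * η)) • m = xbar - (α * η) • m := by
      rw [neg_smul, ← sub_eq_add_neg]
    rw [hx] at hdesc
    have hinner : ⟪G xbar, (-(α * η)) • m⟫_ℝ = (-(α * η)) * ⟪G xbar, m⟫_ℝ :=
      real_inner_smul_right _ _ _
    have hv2 : ‖(-(α * η)) • m‖ ^ 2 = (α * η) ^ 2 * ‖m‖ ^ 2 := by
      rw [norm_smul, mul_pow, Real.norm_eq_abs, sq_abs, neg_sq]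
    rw [hinner, hv2] at hdesc
    set g : EuclideanSpace ℝ (Fin dd) := G xbar with hg
    set S : EuclideanSpace ℝ (Fin dd) := (N : ℝ)⁻¹ • ∑ n, gradient (Fn n) (x n) with hS
    have key1 : ‖g - m‖ ^ 2 = ‖g‖ ^ 2 - 2 * ⟪g, m⟫_ℝ + ‖m‖ ^ 2 := norm_sub_sq_real g m
    have key2 : ‖g - m‖ ^ 2 ≤ 2 * ‖m - S‖ ^ 2 + 2 * ‖S - g‖ ^ 2 := by
      have he : g - m = -((m - S) + (S - g)) := by abel
      have ht : ‖g - m‖ ≤ ‖m - S‖ + ‖S - g‖ := by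
        rw [he, norm_neg]; exact norm_add_le _ _
      nlinarith [norm_nonneg (g - m), norm_nonneg (m - S), norm_nonneg (S - g),
        sq_nonneg (‖m - S‖ - ‖S - g‖)]
    have key3 : ‖S - g‖ ^ 2 ≤ LF ^ 2 * ((N : ℝ)⁻¹ * ∑ n, ‖x n - xbar‖ ^ 2) := by
      have hSg : S - g = (N : ℝ)⁻¹ • ∑ n, (gradient (Fn n) (x n) - gradient (Fn n) xbar) := by
        rw [hS, hg, hG, ← smul_sub, ← Finset.sum_sub_distrib]
      have hnorm : ‖S - g‖ ≤ (N : ℝ)⁻¹ * ∑ n, ‖gradient (Fn n) (x n) - gradient (Fn n) xbar‖ := by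
        rw [hSg, norm_smul, Real.norm_eq_abs, abs_of_pos (by positivity)]
        exact mul_le_mul_of_nonneg_left (norm_sum_le _ _) (by positivity)
      have hCS : (∑ n, ‖gradient (Fn n) (x n) - gradient (Fn n) xbar‖) ^ 2 ≤
          (N : ℝ) * ∑ n, ‖gradient (Fn n) (x n) - gradient (Fn n) xbar‖ ^ 2 := by
        have := Finset.sum_mul_sq_le_sq_mul_sq Finset.univ (fun _ : Fin N => (1:ℝ))
          (fun n => ‖gradient (Fn n) (x n) - gradient (Fn n) xbar‖)
        simpa using this
      have hsq : ∑ n, ‖gradient (Fn n) (x n) - gradient (Fn n) xbar‖ ^ 2 ≤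
          ∑ n, LF ^ 2 * ‖x n - xbar‖ ^ 2 := by
        refine Finset.sum_le_sum fun n _ => ?_
        nlinarith [hsmooth n (x n) xbar, norm_nonneg (gradient (Fn n) (x n) - gradient (Fn n) xbar),
          norm_nonneg (x n - xbar)]
      calc ‖S - g‖ ^ 2
          ≤ ((N : ℝ)⁻¹ * ∑ n, ‖gradient (Fn n) (x n) - gradient (Fn n) xbar‖) ^ 2 :=
            pow_le_pow_left₀ (norm_nonneg _) hnorm 2
        _ = (N : ℝ)⁻¹ ^ 2 * (∑ n, ‖gradient (Fn n) (x n) - gradient (Fn n) xbar‖) ^ 2 := by ring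
        _ ≤ (N : ℝ)⁻¹ ^ 2 * ((N : ℝ) * ∑ n, ‖gradient (Fn n) (x n) - gradient (Fn n) xbar‖ ^ 2) :=
            mul_le_mul_of_nonneg_left hCS (by positivity)
        _ ≤ (N : ℝ)⁻¹ ^ 2 * ((N : ℝ) * ∑ n, LF ^ 2 * ‖x n - xbar‖ ^ 2) :=
            mul_le_mul_of_nonneg_left (mul_le_mul_of_nonneg_left hsq hNR.le) (by positivity)
        _ = LF ^ 2 * ((N : ℝ)⁻¹ * ∑ n, ‖x n - xbar‖ ^ 2) := by
            rw [← Finset.mul_sum]; field_simp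
    have ht : (0:ℝ) < α * η := mul_pos hα hη
    have h5 : (α * η) / 2 * ‖g - m‖ ^ 2 ≤
        (α * η) / 2 * (2 * ‖m - S‖ ^ 2 + 2 * ‖S - g‖ ^ 2) :=
      mul_le_mul_of_nonneg_left key2 (by positivity)
    have h6 : (α * η) * ‖S - g‖ ^ 2 ≤
        (α * η) * (LF ^ 2 * ((N : ℝ)⁻¹ * ∑ n, ‖x n - xbar‖ ^ 2)) :=
      mul_le_mul_of_nonneg_left key3 ht.le
    have h7 : (α * η) * ⟪g, m⟫_ℝ =
        (α * η) / 2 * (‖g‖ ^ 2 + ‖m‖ ^ 2 - ‖g - m‖ ^ 2) := by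
      rw [key1]; ring
    have hC : LF / 2 * ((α * η) ^ 2 * ‖m‖ ^ 2) ≤ (α * η) / 4 * ‖m‖ ^ 2 := by
      nlinarith [sq_nonneg ‖m‖, ht, hstep]
    linarith [hdesc, h5, h6, h7, hC]
end

section
/- Let $f:\mathbb{R}^{d_0}\to\mathbb{R}^{d_1}$ be a deterministic function and for each time $t$ let $f(\cdot;\xi_t)$ be a random function with $\mathbb{E}_{\xi_t}[f(y;\xi_t)]=f(y)$, $\mathbb{E}\|f(y;\xi_t)-f(y)\|^2\le\delta^2$ for all $y$, and $\|f(y_1;\xi)-f(y_2;\xi)\|\le C\|y_1-y_2\|$ almost surely. Consider the STORM-like update $u_t = (1-\beta\eta)\big(u_{t-1} - f(w_{t-1};\xi_t)\big) + f(w_t;\xi_t)$ where $w_{t-1},w_t$ are $\xi_t$-measurable-in-the-past (i.e., independent of $\xi_t$), and $\beta\eta\in(0,1)$. Then $\mathbb{E}\|u_t - f(w_t)\|^2 \le (1-\beta\eta)\,\mathbb{E}\|u_{t-1} - f(w_{t-1})\|^2 + 2C^2\,\mathbb{E}\|w_t - w_{t-1}\|^2 + 2\beta^2\eta^2\delta^2$.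 -/
open MeasureTheory

open scoped RealInnerProductSpace in
/-- Expansion of the expected squared norm of a constant plus a random vector. -/
lemma expand_sq {Ω : Type*} [MeasurableSpace Ω] {μ : Measure Ω} [IsProbabilityMeasure μ]
    {V : Type*} [NormedAddCommGroup V] [InnerProductSpace ℝ V] [CompleteSpace V]
    (a : V) {M : Ω → V} (hM : Integrable M μ)
    (hM2 : Integrable (fun ω => ‖M ω‖ ^ 2) μ) :
    ∫ ω, ‖a + M ω‖ ^ 2 ∂μ
      = ‖a‖ ^ 2 + 2 * ⟪a, ∫ ω, M ω ∂μ⟫ + ∫ ω, ‖M ω‖ ^ 2 ∂μ := by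
  have h1 : ∀ ω, ‖a + M ω‖ ^ 2 = ‖a‖ ^ 2 + 2 * ⟪a, M ω⟫ + ‖M ω‖ ^ 2 := fun ω =>
    norm_add_sq_real a (M ω)
  have hi : Integrable (fun ω => 2 * ⟪a, M ω⟫) μ := by
    exact (hM.const_inner a).const_mul 2
  have hInt1 : Integrable (fun ω => ‖a‖ ^ 2 + 2 * ⟪a, M ω⟫) μ := by
    exact (integrable_const _).add hi
  calc ∫ ω, ‖a + M ω‖ ^ 2 ∂μ
      = ∫ ω, (‖a‖ ^ 2 + 2 * ⟪a, M ω⟫) + ‖M ω‖ ^ 2 ∂μ := by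
        simp only [h1]
    _ = (∫ ω, ‖a‖ ^ 2 + 2 * ⟪a, M ω⟫ ∂μ) + ∫ ω, ‖M ω‖ ^ 2 ∂μ :=
        integral_add hInt1 hM2
    _ = ‖a‖ ^ 2 + 2 * ⟪a, ∫ ω, M ω ∂μ⟫ + ∫ ω, ‖M ω‖ ^ 2 ∂μ := by
        rw [integral_add (integrable_const _) hi, integral_const, integral_const_mul,
          integral_inner hM]
        simp

set_option maxHeartbeats 2000000 in
/-- One-step error contraction of the STORM-like inner-level estimator
`u_t = (1−βη)(u_{t−1} − f(w_{t−1};ξ_t)) + f(w_t;ξ_t)`.  Independence of `(u_{t−1}, w_{t−1}, w_t)`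
from the fresh sample `ξ_t` is modelled by a product probability space `Ω₁ × Ω₂`, where the
past variables depend on `ω₁` and the sample on `ω₂`. -/
theorem stmt10 {Ω₁ Ω₂ : Type*} [MeasurableSpace Ω₁] [MeasurableSpace Ω₂]
    (μ₁ : Measure Ω₁) (μ₂ : Measure Ω₂)
    [IsProbabilityMeasure μ₁] [IsProbabilityMeasure μ₂]
    (d₀ d₁ : ℕ)
    (f : EuclideanSpace ℝ (Fin d₀) → EuclideanSpace ℝ (Fin d₁))
    (S : EuclideanSpace ℝ (Fin d₀) → Ω₂ → EuclideanSpace ℝ (Fin d₁))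
    (C δ β η : ℝ) (hβη0 : 0 < β * η) (hβη1 : β * η < 1)
    (hSmeas : Measurable (Function.uncurry S))
    (hSint : ∀ y, Integrable (S y) μ₂)
    (hunbiased : ∀ y, ∫ ω₂, S y ω₂ ∂μ₂ = f y)
    (hvar : ∀ y, ∫ ω₂, ‖S y ω₂ - f y‖ ^ 2 ∂μ₂ ≤ δ ^ 2)
    (hLip : ∀ᵐ ω₂ ∂μ₂, ∀ y₁ y₂, ‖S y₁ ω₂ - S y₂ ω₂‖ ≤ C * ‖y₁ - y₂‖)
    (u' : Ω₁ → EuclideanSpace ℝ (Fin d₁))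
    (w' w : Ω₁ → EuclideanSpace ℝ (Fin d₀))
    (hu' : Measurable u') (hw' : Measurable w') (hw : Measurable w)
    (hint1 : Integrable (fun ω₁ => ‖u' ω₁ - f (w' ω₁)‖ ^ 2) μ₁)
    (hint2 : Integrable (fun ω₁ => ‖w ω₁ - w' ω₁‖ ^ 2) μ₁)
    (hint3 : Integrable
      (fun p : Ω₁ × Ω₂ =>
        ‖(1 - β * η) • (u' p.1 - S (w' p.1) p.2) + S (w p.1) p.2 - f (w p.1)‖ ^ 2)
      (μ₁.prod μ₂)) :
    ∫ p, ‖(1 - β * η) • (u' p.1 - S (w' p.1) p.2) + S (w p.1) p.2 - f (w p.1)‖ ^ 2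
        ∂(μ₁.prod μ₂) ≤
      (1 - β * η) * ∫ ω₁, ‖u' ω₁ - f (w' ω₁)‖ ^ 2 ∂μ₁
        + 2 * C ^ 2 * ∫ ω₁, ‖w ω₁ - w' ω₁‖ ^ 2 ∂μ₁
        + 2 * β ^ 2 * η ^ 2 * δ ^ 2 := by
  set c : ℝ := 1 - β * η with hc
  have hc0 : 0 ≤ c := by rw [hc]; linarith
  have hc1 : c ≤ 1 := by rw [hc]; linarith
  -- measurability of sections of S
  have hSy : ∀ y, Measurable (S y) := fun y =>
    hSmeas.comp measurable_prodMk_left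
  -- key a.e. bound on inner integrals
  have key : ∀ᵐ ω₁ ∂μ₁,
      (∫ ω₂, ‖c • (u' ω₁ - S (w' ω₁) ω₂) + S (w ω₁) ω₂ - f (w ω₁)‖ ^ 2 ∂μ₂)
        ≤ c ^ 2 * ‖u' ω₁ - f (w' ω₁)‖ ^ 2 + 2 * C ^ 2 * ‖w ω₁ - w' ω₁‖ ^ 2
          + 2 * β ^ 2 * η ^ 2 * δ ^ 2 := by
    filter_upwards [hint3.prod_right_ae] with ω₁ hX2
    set y := w ω₁ with hy
    set y' := w' ω₁ with hy'
    set a : EuclideanSpace ℝ (Fin d₁) := u' ω₁ - f y' with ha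
    set M : Ω₂ → EuclideanSpace ℝ (Fin d₁) :=
      fun ω₂ => (S y ω₂ - f y) - c • (S y' ω₂ - f y') with hMdef
    set B : Ω₂ → EuclideanSpace ℝ (Fin d₁) := fun ω₂ => S y' ω₂ - f y' with hBdef
    set Y : Ω₂ → EuclideanSpace ℝ (Fin d₁) := fun ω₂ => S y ω₂ - S y' ω₂ with hYdef
    set A : Ω₂ → EuclideanSpace ℝ (Fin d₁) := fun ω₂ => Y ω₂ - (f y - f y') with hAdef
    -- pointwise identities
    have hid : ∀ ω₂, c • (u' ω₁ - S y' ω₂) + S y ω₂ - f y = c • a + M ω₂ := by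
      intro ω₂
      simp only [hMdef, ha]
      module
    have hMY : ∀ ω₂, M ω₂ = A ω₂ + (β * η) • B ω₂ := by
      intro ω₂
      simp only [hMdef, hAdef, hBdef, hYdef, hc]
      module
    -- integrability facts
    have hBint : Integrable B μ₂ := by
      exact (hSint y').sub (integrable_const _)
    have hYint : Integrable Y μ₂ := by
      exact (hSint y).sub (hSint y')
    have hB0 : ∫ ω₂, B ω₂ ∂μ₂ = 0 := by
      simp only [hBdef]
      rw [integral_sub (hSint y') (integrable_const _), hunbiased y', integral_const]
      simp
    have hYm : ∫ ω₂, Y ω₂ ∂μ₂ = f y - f y' := by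
      simp only [hYdef]
      rw [integral_sub (hSint y) (hSint y'), hunbiased y, hunbiased y']
    have hAint : Integrable A μ₂ := by
      exact hYint.sub (integrable_const _)
    have hA0 : ∫ ω₂, A ω₂ ∂μ₂ = 0 := by
      simp only [hAdef]
      rw [integral_sub hYint (integrable_const _), hYm, integral_const]
      simp
    have hBsint : Integrable (fun ω₂ => (β * η) • B ω₂) μ₂ := by
      exact hBint.smul (β * η)
    have hMint : Integrable M μ₂ := by
      have h : Integrable (fun ω₂ => A ω₂ + (β * η) • B ω₂) μ₂ := hAint.add hBsint
      exact h.congr (Filter.Eventually.of_forall fun ω₂ => (hMY ω₂).symm)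
    have hM0 : ∫ ω₂, M ω₂ ∂μ₂ = 0 := by
      have h : ∫ ω₂, (A ω₂ + (β * η) • B ω₂) ∂μ₂
          = (∫ ω₂, A ω₂ ∂μ₂) + ∫ ω₂, (β * η) • B ω₂ ∂μ₂ := integral_add hAint hBsint
      rw [integral_smul, hA0, hB0, smul_zero, add_zero] at h
      calc ∫ ω₂, M ω₂ ∂μ₂ = ∫ ω₂, (A ω₂ + (β * η) • B ω₂) ∂μ₂ := by simp only [hMY]
        _ = 0 := h
    -- measurability
    have hYmeas : Measurable Y := (hSy y).sub (hSy y')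
    have hAmeas : Measurable A := hYmeas.sub measurable_const
    have hBmeas : Measurable B := (hSy y').sub measurable_const
    have hMmeas : Measurable M := by
      have hfe : M = fun ω₂ => A ω₂ + (β * η) • B ω₂ := funext hMY
      rw [hfe]
      exact hAmeas.add (hBmeas.const_smul (β * η))
    -- Y is a.e. bounded, so ‖Y‖² integrable
    have hY2 : Integrable (fun ω₂ => ‖Y ω₂‖ ^ 2) μ₂ := by
      refine Integrable.mono' (integrable_const ((C * ‖y - y'‖) ^ 2))
        ((hYmeas.norm.pow_const 2).aestronglyMeasurable) ?_
      filter_upwards [hLip] with ω₂ h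
      have h1 := h y y'
      have h2 : (0:ℝ) ≤ ‖Y ω₂‖ := norm_nonneg _
      rw [Real.norm_eq_abs, abs_of_nonneg (by positivity)]
      nlinarith
    have hA2 : Integrable (fun ω₂ => ‖A ω₂‖ ^ 2) μ₂ := by
      have hbound : Integrable (fun ω₂ => 2 * ‖Y ω₂‖ ^ 2 + 2 * ‖f y - f y'‖ ^ 2) μ₂ := by
        exact (hY2.const_mul 2).add (integrable_const _)
      refine Integrable.mono' hbound ((hAmeas.norm.pow_const 2).aestronglyMeasurable) ?_
      refine Filter.Eventually.of_forall fun ω₂ => ?_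
      rw [Real.norm_eq_abs, abs_of_nonneg (by positivity)]
      have h1 : ‖A ω₂‖ ≤ ‖Y ω₂‖ + ‖f y - f y'‖ := norm_sub_le _ _
      have h2 : ‖A ω₂‖ ^ 2 ≤ (‖Y ω₂‖ + ‖f y - f y'‖) ^ 2 :=
        pow_le_pow_left₀ (norm_nonneg _) h1 2
      nlinarith [sq_nonneg (‖Y ω₂‖ - ‖f y - f y'‖)]
    -- rewrite integrand
    have hX2' : Integrable (fun ω₂ => ‖c • a + M ω₂‖ ^ 2) μ₂ := by
      have h := hX2
      simp only [hid] at h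
      exact h
    have hM2 : Integrable (fun ω₂ => ‖M ω₂‖ ^ 2) μ₂ := by
      have hbound : Integrable (fun ω₂ => 2 * ‖c • a + M ω₂‖ ^ 2 + 2 * ‖c • a‖ ^ 2) μ₂ := by
        exact (hX2'.const_mul 2).add (integrable_const _)
      refine Integrable.mono' hbound ((hMmeas.norm.pow_const 2).aestronglyMeasurable) ?_
      refine Filter.Eventually.of_forall fun ω₂ => ?_
      rw [Real.norm_eq_abs, abs_of_nonneg (by positivity)]
      have h1 : ‖M ω₂‖ ≤ ‖c • a + M ω₂‖ + ‖c • a‖ := by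
        have h2 := norm_sub_le (c • a + M ω₂) (c • a)
        rwa [add_sub_cancel_left] at h2
      have h3 : ‖M ω₂‖ ^ 2 ≤ (‖c • a + M ω₂‖ + ‖c • a‖) ^ 2 :=
        pow_le_pow_left₀ (norm_nonneg _) h1 2
      nlinarith [sq_nonneg (‖c • a + M ω₂‖ - ‖c • a‖)]
    have hB2 : Integrable (fun ω₂ => ‖B ω₂‖ ^ 2) μ₂ := by
      have hbound : Integrable
          (fun ω₂ => (β * η)⁻¹ ^ 2 * (2 * ‖M ω₂‖ ^ 2 + 2 * ‖A ω₂‖ ^ 2)) μ₂ := by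
        exact ((hM2.const_mul 2).add (hA2.const_mul 2)).const_mul ((β * η)⁻¹ ^ 2)
      refine Integrable.mono' hbound ((hBmeas.norm.pow_const 2).aestronglyMeasurable) ?_
      refine Filter.Eventually.of_forall fun ω₂ => ?_
      rw [Real.norm_eq_abs, abs_of_nonneg (by positivity)]
      have h1 : (β * η) • B ω₂ = M ω₂ - A ω₂ := by rw [hMY ω₂]; abel
      have h2 : ‖(β * η) • B ω₂‖ = (β * η) * ‖B ω₂‖ := by
        rw [norm_smul, Real.norm_eq_abs, abs_of_pos hβη0]
      have h3 : (β * η) * ‖B ω₂‖ ≤ ‖M ω₂‖ + ‖A ω₂‖ := by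
        rw [← h2, h1]; exact norm_sub_le _ _
      have h4 : ‖B ω₂‖ = (β * η)⁻¹ * ((β * η) * ‖B ω₂‖) := by
        rw [← mul_assoc, inv_mul_cancel₀ hβη0.ne', one_mul]
      rw [h4]
      have h6 : (0:ℝ) ≤ (β * η) * ‖B ω₂‖ := by positivity
      calc ((β * η)⁻¹ * ((β * η) * ‖B ω₂‖)) ^ 2
          = (β * η)⁻¹ ^ 2 * ((β * η) * ‖B ω₂‖) ^ 2 := by ring
        _ ≤ (β * η)⁻¹ ^ 2 * (2 * ‖M ω₂‖ ^ 2 + 2 * ‖A ω₂‖ ^ 2) := by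
            have h7 : ((β * η) * ‖B ω₂‖) ^ 2 ≤ (‖M ω₂‖ + ‖A ω₂‖) ^ 2 := by nlinarith
            have h8 : (‖M ω₂‖ + ‖A ω₂‖) ^ 2 ≤ 2 * ‖M ω₂‖ ^ 2 + 2 * ‖A ω₂‖ ^ 2 := by
              nlinarith [sq_nonneg (‖M ω₂‖ - ‖A ω₂‖)]
            nlinarith [sq_nonneg ((β * η)⁻¹)]
    -- step 1 : inner expansion
    have step1 : ∫ ω₂, ‖c • a + M ω₂‖ ^ 2 ∂μ₂
        = ‖c • a‖ ^ 2 + ∫ ω₂, ‖M ω₂‖ ^ 2 ∂μ₂ := by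
      rw [expand_sq (c • a) hMint hM2, hM0]
      simp
    -- step 2 : variance inequality for A
    have step2 : ∫ ω₂, ‖A ω₂‖ ^ 2 ∂μ₂ ≤ C ^ 2 * ‖y - y'‖ ^ 2 := by
      have hYA : ∫ ω₂, ‖Y ω₂‖ ^ 2 ∂μ₂
          = ‖f y - f y'‖ ^ 2 + ∫ ω₂, ‖A ω₂‖ ^ 2 ∂μ₂ := by
        have hpt : ∀ ω₂, Y ω₂ = (f y - f y') + A ω₂ := by
          intro ω₂; simp only [hAdef]; abel
        calc ∫ ω₂, ‖Y ω₂‖ ^ 2 ∂μ₂ = ∫ ω₂, ‖(f y - f y') + A ω₂‖ ^ 2 ∂μ₂ := by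
              congr 1; funext ω₂; rw [← hpt ω₂]
          _ = ‖f y - f y'‖ ^ 2 + ∫ ω₂, ‖A ω₂‖ ^ 2 ∂μ₂ := by
              rw [expand_sq (f y - f y') hAint hA2, hA0]; simp
      have hYb : ∫ ω₂, ‖Y ω₂‖ ^ 2 ∂μ₂ ≤ C ^ 2 * ‖y - y'‖ ^ 2 := by
        have h := integral_mono_ae hY2 (integrable_const (C ^ 2 * ‖y - y'‖ ^ 2)) ?_
        · simpa using h
        · filter_upwards [hLip] with ω₂ hl
          have h1 := hl y y'
          show ‖Y ω₂‖ ^ 2 ≤ C ^ 2 * ‖y - y'‖ ^ 2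
          nlinarith [norm_nonneg (Y ω₂)]
      nlinarith [sq_nonneg ‖f y - f y'‖]
    -- step 3 : variance bound for B
    have step3 : ∫ ω₂, ‖B ω₂‖ ^ 2 ∂μ₂ ≤ δ ^ 2 := hvar y'
    -- step 4 : bound on ∫ ‖M‖²
    have step4 : ∫ ω₂, ‖M ω₂‖ ^ 2 ∂μ₂
        ≤ 2 * (∫ ω₂, ‖A ω₂‖ ^ 2 ∂μ₂) + 2 * (β * η) ^ 2 * ∫ ω₂, ‖B ω₂‖ ^ 2 ∂μ₂ := by
      have hbound : Integrable
          (fun ω₂ => 2 * ‖A ω₂‖ ^ 2 + 2 * (β * η) ^ 2 * ‖B ω₂‖ ^ 2) μ₂ := by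
        exact (hA2.const_mul 2).add (hB2.const_mul (2 * (β * η) ^ 2))
      have hmono := integral_mono hM2 hbound ?_
      · rw [integral_add (hA2.const_mul 2) (hB2.const_mul (2 * (β * η) ^ 2)),
          integral_const_mul, integral_const_mul] at hmono
        linarith
      · intro ω₂
        show ‖M ω₂‖ ^ 2 ≤ 2 * ‖A ω₂‖ ^ 2 + 2 * (β * η) ^ 2 * ‖B ω₂‖ ^ 2
        have h1 : ‖M ω₂‖ ≤ ‖A ω₂‖ + (β * η) * ‖B ω₂‖ := by
          rw [hMY ω₂]
          calc ‖A ω₂ + (β * η) • B ω₂‖ ≤ ‖A ω₂‖ + ‖(β * η) • B ω₂‖ := norm_add_le _ _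
            _ = ‖A ω₂‖ + (β * η) * ‖B ω₂‖ := by
                rw [norm_smul, Real.norm_eq_abs, abs_of_pos hβη0]
        have hb : (0:ℝ) ≤ (β * η) * ‖B ω₂‖ := by positivity
        nlinarith [norm_nonneg (M ω₂), norm_nonneg (A ω₂),
          sq_nonneg (‖A ω₂‖ - (β * η) * ‖B ω₂‖)]
    -- combine
    have hnorm : ‖c • a‖ ^ 2 = c ^ 2 * ‖a‖ ^ 2 := by
      rw [norm_smul, Real.norm_eq_abs, abs_of_nonneg hc0, mul_pow]
    calc ∫ ω₂, ‖c • (u' ω₁ - S y' ω₂) + S y ω₂ - f y‖ ^ 2 ∂μ₂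
        = ∫ ω₂, ‖c • a + M ω₂‖ ^ 2 ∂μ₂ := by
          congr 1; funext ω₂; rw [hid ω₂]
      _ = ‖c • a‖ ^ 2 + ∫ ω₂, ‖M ω₂‖ ^ 2 ∂μ₂ := step1
      _ ≤ c ^ 2 * ‖a‖ ^ 2 + (2 * (C ^ 2 * ‖y - y'‖ ^ 2) + 2 * (β * η) ^ 2 * δ ^ 2) := by
          rw [hnorm]
          have h2 : (0:ℝ) ≤ 2 * (β * η) ^ 2 := by positivity
          nlinarith [step2, step3, step4]
      _ ≤ c ^ 2 * ‖a‖ ^ 2 + 2 * C ^ 2 * ‖y - y'‖ ^ 2 + 2 * β ^ 2 * η ^ 2 * δ ^ 2 :=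
          le_of_eq (by ring)
  -- outer integration
  have hF : Integrable
      (fun ω₁ => ∫ ω₂, ‖c • (u' ω₁ - S (w' ω₁) ω₂) + S (w ω₁) ω₂ - f (w ω₁)‖ ^ 2 ∂μ₂) μ₁ := by
    exact hint3.integral_prod_left
  have hg : Integrable
      (fun ω₁ => c ^ 2 * ‖u' ω₁ - f (w' ω₁)‖ ^ 2 + 2 * C ^ 2 * ‖w ω₁ - w' ω₁‖ ^ 2
        + 2 * β ^ 2 * η ^ 2 * δ ^ 2) μ₁ := by
    exact ((hint1.const_mul (c ^ 2)).add (hint2.const_mul (2 * C ^ 2))).add (integrable_const _)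
  have hg1 : Integrable
      (fun ω₁ => c ^ 2 * ‖u' ω₁ - f (w' ω₁)‖ ^ 2 + 2 * C ^ 2 * ‖w ω₁ - w' ω₁‖ ^ 2) μ₁ := by
    exact (hint1.const_mul (c ^ 2)).add (hint2.const_mul (2 * C ^ 2))
  have hmain := integral_mono_ae hF hg key
  rw [integral_add hg1 (integrable_const _),
    integral_add (hint1.const_mul (c ^ 2)) (hint2.const_mul (2 * C ^ 2)),
    integral_const_mul, integral_const_mul, integral_const] at hmain
  simp only [probReal_univ, measure_univ, ENNReal.toReal_one, smul_eq_mul, one_mul] at hmain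
  have hnn : 0 ≤ ∫ ω₁, ‖u' ω₁ - f (w' ω₁)‖ ^ 2 ∂μ₁ :=
    integral_nonneg fun ω₁ => by positivity
  have hcc : c ^ 2 ≤ c := by nlinarith
  calc ∫ p, ‖c • (u' p.1 - S (w' p.1) p.2) + S (w p.1) p.2 - f (w p.1)‖ ^ 2 ∂(μ₁.prod μ₂)
      = ∫ ω₁, ∫ ω₂, ‖c • (u' ω₁ - S (w' ω₁) ω₂) + S (w ω₁) ω₂ - f (w ω₁)‖ ^ 2 ∂μ₂ ∂μ₁ :=
        integral_prod _ hint3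
    _ ≤ c ^ 2 * (∫ ω₁, ‖u' ω₁ - f (w' ω₁)‖ ^ 2 ∂μ₁)
        + 2 * C ^ 2 * (∫ ω₁, ‖w ω₁ - w' ω₁‖ ^ 2 ∂μ₁) + 2 * β ^ 2 * η ^ 2 * δ ^ 2 := hmain
    _ ≤ c * (∫ ω₁, ‖u' ω₁ - f (w' ω₁)‖ ^ 2 ∂μ₁)
        + 2 * C ^ 2 * (∫ ω₁, ‖w ω₁ - w' ω₁‖ ^ 2 ∂μ₁) + 2 * β ^ 2 * η ^ 2 * δ ^ 2 := by
        nlinarith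
end

section
/- Let $h_t,g_t\in\mathbb{R}^d$ be random vectors, $\mu\eta\in(0,1)$, and define the momentum sequence $m_t = (1-\mu\eta)m_{t-1} + \mu\eta\, g_t$. Suppose $\mathbb{E}[g_t\mid\mathcal{F}_{t}] = h_t$ where $h_t$ is $\mathcal{F}_t$-measurable, $m_{t-1}$ is $\mathcal{F}_t$-measurable, and $\mathbb{E}\|g_t - h_t\|^2 \le \sigma^2$. Then for any $\mathcal{F}_t$-measurable target $G_t$ and $G_{t-1}$ with $\mathbb{E}\|G_t - G_{t-1}\|^2 \le \Delta^2$: $\mathbb{E}\|m_t - G_t\|^2 \le (1-\mu\eta)\,\mathbb{E}\|m_{t-1}-G_{t-1}\|^2 + \frac{2}{\mu\eta}\mathbb{E}\|G_t - G_{t-1}\|^2 + 2\mu\eta\,\mathbb{E}\|h_t - G_t\|^2 + \mu^2\eta^2\sigma^2$. -/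
open MeasureTheory

lemma young3 (c x y z : ℝ) (hc0 : 0 < c) (hc1 : c < 1) :
    ((1-c)*x + ((1-c)*y + c*z))^2 ≤ (1-c)*x^2 + (2/c)*y^2 + 2*c*z^2 := by
  set u : ℝ := (1-c)*x with hu
  set v : ℝ := (1-c)*y + c*z with hv
  have hc1' : (0:ℝ) < 1 - c := by linarith
  have s1 : (1-c) * (c * (u+v)^2) ≤ (1-c) * (c*(1-c)*x^2 + v^2) := by
    rw [hu]; nlinarith [sq_nonneg (c*((1-c)*x) - (1-c)*v)]
  have s1' : c * (u+v)^2 ≤ c*(1-c)*x^2 + v^2 := le_of_mul_le_mul_left s1 hc1'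
  have t1 : v^2 ≤ 2*y^2 + 2*c^2*z^2 := by
    rw [hv]
    nlinarith [sq_nonneg ((1-c)*y - c*z), mul_nonneg hc0.le (sq_nonneg y),
      mul_nonneg (mul_nonneg hc0.le hc0.le) (sq_nonneg y)]
  have key : c * ((u+v)^2) ≤ c*(1-c)*x^2 + 2*y^2 + 2*c^2*z^2 := by linarith
  have e : c * ((1-c)*x^2 + (2/c)*y^2 + 2*c*z^2) = c*(1-c)*x^2 + 2*y^2 + 2*c^2*z^2 := by
    field_simp
  rw [← e] at key
  exact le_of_mul_le_mul_left key hc0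


set_option maxHeartbeats 1000000 in
/-- Generic momentum tracking-error recursion for
`m_t = (1−μη) m_{t−1} + μη g_t`, where `𝔼[g_t ∣ ℱ_t] = h_t` and `m_{t−1}, h_t, G_t, G_{t−1}`
are `ℱ_t`-measurable.  The `ℱ_t`-measurable quantities depend on `ω₁` and the fresh sample
generating `g_t` on `ω₂`, on the product probability space `Ω₁ × Ω₂`. -/
theorem stmt13 {Ω₁ Ω₂ : Type*} [MeasurableSpace Ω₁] [MeasurableSpace Ω₂]
    (P₁ : Measure Ω₁) (P₂ : Measure Ω₂)
    [IsProbabilityMeasure P₁] [IsProbabilityMeasure P₂]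
    (dd : ℕ) (mu eta σ Δ : ℝ) (h0 : 0 < mu * eta) (h1 : mu * eta < 1)
    (h G G' m' : Ω₁ → EuclideanSpace ℝ (Fin dd))
    (g : Ω₁ × Ω₂ → EuclideanSpace ℝ (Fin dd))
    (hhm : Measurable h) (hGm : Measurable G) (hG'm : Measurable G') (hm'm : Measurable m')
    (hgm : Measurable g)
    (hgint : Integrable g (P₁.prod P₂))
    (hunb : ∀ᵐ ω₁ ∂P₁, ∫ ω₂, g (ω₁, ω₂) ∂P₂ = h ω₁)
    (hvar : ∫ p, ‖g p - h p.1‖ ^ 2 ∂(P₁.prod P₂) ≤ σ ^ 2)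
    (hvarint : Integrable (fun p => ‖g p - h p.1‖ ^ 2) (P₁.prod P₂))
    (hΔ : ∫ ω₁, ‖G ω₁ - G' ω₁‖ ^ 2 ∂P₁ ≤ Δ ^ 2)
    (hint1 : Integrable (fun ω₁ => ‖m' ω₁ - G' ω₁‖ ^ 2) P₁)
    (hint2 : Integrable (fun ω₁ => ‖G ω₁ - G' ω₁‖ ^ 2) P₁)
    (hint3 : Integrable (fun ω₁ => ‖h ω₁ - G ω₁‖ ^ 2) P₁) :
    ∫ p, ‖(1 - mu * eta) • m' p.1 + (mu * eta) • g p - G p.1‖ ^ 2 ∂(P₁.prod P₂) ≤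
      (1 - mu * eta) * ∫ ω₁, ‖m' ω₁ - G' ω₁‖ ^ 2 ∂P₁
        + (2 / (mu * eta)) * ∫ ω₁, ‖G ω₁ - G' ω₁‖ ^ 2 ∂P₁
        + 2 * (mu * eta) * ∫ ω₁, ‖h ω₁ - G ω₁‖ ^ 2 ∂P₁
        + mu ^ 2 * eta ^ 2 * σ ^ 2 := by
  set c : ℝ := mu * eta with hc
  set A : Ω₁ → EuclideanSpace ℝ (Fin dd) := fun x => (1-c) • m' x + c • h x - G x with hA
  set w : Ω₁ × Ω₂ → EuclideanSpace ℝ (Fin dd) := fun p => g p - h p.1 with hw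
  have hAm : Measurable A := by fun_prop
  have hwm : Measurable w := hgm.sub (hhm.comp measurable_fst)
  -- pointwise decomposition
  have hpt : ∀ p : Ω₁ × Ω₂, ‖(1 - c) • m' p.1 + c • g p - G p.1‖ ^ 2
      = ‖A p.1‖^2 + 2 * c * (inner ℝ (A p.1) (w p) : ℝ) + c^2 * ‖w p‖^2 := by
    intro p
    have hdecomp : (1 - c) • m' p.1 + c • g p - G p.1 = A p.1 + c • w p := by
      simp only [hA, hw]; module
    rw [hdecomp, norm_add_sq_real, real_inner_smul_right, norm_smul, Real.norm_eq_abs,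
      mul_pow, sq_abs]
    ring
  -- pointwise Young bound for ‖A‖²
  have hApt2 : ∀ x, ‖A x‖^2 ≤ (1-c)*‖m' x - G' x‖^2 + (2/c)*‖G x - G' x‖^2 + 2*c*‖h x - G x‖^2 := by
    intro x
    have hd : A x = (1-c) • (m' x - G' x) + ((1-c) • (G' x - G x) + c • (h x - G x)) := by
      simp only [hA]; module
    have hn : ‖A x‖ ≤ (1-c)*‖m' x - G' x‖ + ((1-c)*‖G x - G' x‖ + c*‖h x - G x‖) := by
      rw [hd]
      refine le_trans (norm_add_le _ _) (add_le_add ?_ (le_trans (norm_add_le _ _)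
        (add_le_add ?_ ?_))) <;>
        rw [norm_smul, Real.norm_eq_abs]
      · rw [abs_of_pos (by linarith)]
      · rw [abs_of_pos (by linarith), norm_sub_rev (G' x) (G x)]
      · rw [abs_of_pos h0]
    calc ‖A x‖^2 ≤ ((1-c)*‖m' x - G' x‖ + ((1-c)*‖G x - G' x‖ + c*‖h x - G x‖))^2 := by
          apply sq_le_sq' _ hn
          have := norm_nonneg (A x)
          linarith
      _ ≤ (1-c)*‖m' x - G' x‖^2 + (2/c)*‖G x - G' x‖^2 + 2*c*‖h x - G x‖^2 :=
          young3 c _ _ _ h0 h1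
  -- integrability of ‖A‖²
  have hAi : Integrable (fun x => (1-c)*‖m' x - G' x‖^2 + (2/c)*‖G x - G' x‖^2
      + 2*c*‖h x - G x‖^2) P₁ :=
    ((hint1.const_mul _).add (hint2.const_mul _)).add (hint3.const_mul _)
  have hA2 : Integrable (fun x => ‖A x‖^2) P₁ := by
    refine Integrable.mono' hAi ((hAm.norm.pow_const 2).aestronglyMeasurable) ?_
    filter_upwards with x
    rw [Real.norm_eq_abs, abs_of_nonneg (by positivity)]
    exact hApt2 x
  -- ‖A ∘ fst‖² integrable on the product
  have hmapfst : Measure.map Prod.fst (P₁.prod P₂) = P₁ := by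
    rw [Measure.map_fst_prod]; simp
  have hA2sm : AEStronglyMeasurable (fun x => ‖A x‖^2) (Measure.map Prod.fst (P₁.prod P₂)) := by
    rw [hmapfst]; exact (hAm.norm.pow_const 2).aestronglyMeasurable
  have hA2prod : Integrable (fun p : Ω₁ × Ω₂ => ‖A p.1‖^2) (P₁.prod P₂) := by
    have := (integrable_map_measure hA2sm measurable_fst.aemeasurable)
    rw [hmapfst] at this
    exact this.mp hA2
  have hA2int_eq : ∫ p, ‖A p.1‖^2 ∂(P₁.prod P₂) = ∫ x, ‖A x‖^2 ∂P₁ := by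
    conv_rhs => rw [← hmapfst]
    rw [integral_map measurable_fst.aemeasurable hA2sm]
  -- cross term integrable
  have hcrossm : Measurable (fun p : Ω₁ × Ω₂ => (inner ℝ (A p.1) (w p) : ℝ)) :=
    (hAm.comp measurable_fst).inner hwm
  have hcross_int : Integrable (fun p : Ω₁ × Ω₂ => (inner ℝ (A p.1) (w p) : ℝ)) (P₁.prod P₂) := by
    refine Integrable.mono'
      (g := fun p => 1/2 * (‖A p.1‖^2 + ‖g p - h p.1‖^2))
      ((hA2prod.add hvarint).const_mul (1/2)) hcrossm.aestronglyMeasurable ?_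
    filter_upwards with p
    rw [Real.norm_eq_abs]
    have h1 := abs_real_inner_le_norm (A p.1) (w p)
    have h2 : ‖A p.1‖ * ‖w p‖ ≤ 1/2 * (‖A p.1‖^2 + ‖w p‖^2) := by
      nlinarith [sq_nonneg (‖A p.1‖ - ‖w p‖)]
    simp only [hw] at h1 h2
    linarith
  -- cross term is zero
  have hcross_zero : ∫ p, (inner ℝ (A p.1) (w p) : ℝ) ∂(P₁.prod P₂) = 0 := by
    rw [integral_prod _ hcross_int]
    refine integral_eq_zero_of_ae ?_
    filter_upwards [hgint.prod_right_ae, hunb] with x hxint hxmean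
    have hwint : Integrable (fun y => g (x, y) - h x) P₂ := hxint.sub (integrable_const _)
    have heq : ∫ y, (inner ℝ (A x) (g (x,y) - h x) : ℝ) ∂P₂
        = inner ℝ (A x) (∫ y, (g (x,y) - h x) ∂P₂) := integral_inner hwint (A x)
    simp only [hw]
    rw [heq, integral_sub hxint (integrable_const _), integral_const]
    simp only [probReal_univ, one_smul, hxmean, sub_self, inner_zero_right,
      Pi.zero_apply]
  -- put the expansion together
  have hsplit : ∫ p, ‖(1 - c) • m' p.1 + c • g p - G p.1‖ ^ 2 ∂(P₁.prod P₂)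
      = ∫ x, ‖A x‖^2 ∂P₁ + c^2 * ∫ p, ‖w p‖^2 ∂(P₁.prod P₂) := by
    calc ∫ p, ‖(1 - c) • m' p.1 + c • g p - G p.1‖ ^ 2 ∂(P₁.prod P₂)
        = ∫ p, (‖A p.1‖^2 + 2 * c * (inner ℝ (A p.1) (w p) : ℝ) + c^2 * ‖w p‖^2) ∂(P₁.prod P₂) :=
          integral_congr_ae (Filter.Eventually.of_forall hpt)
      _ = ∫ p, ‖A p.1‖^2 ∂(P₁.prod P₂) + ∫ p, 2 * c * (inner ℝ (A p.1) (w p) : ℝ) ∂(P₁.prod P₂)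
            + ∫ p, c^2 * ‖w p‖^2 ∂(P₁.prod P₂) := by
          have i3 : Integrable (fun p : Ω₁ × Ω₂ => 2 * c * (inner ℝ (A p.1) (w p) : ℝ))
              (P₁.prod P₂) := hcross_int.const_mul (2*c)
          have i1 : Integrable (fun p : Ω₁ × Ω₂ =>
              ‖A p.1‖^2 + 2 * c * (inner ℝ (A p.1) (w p) : ℝ)) (P₁.prod P₂) := hA2prod.add i3
          have i2 : Integrable (fun p : Ω₁ × Ω₂ => c^2 * ‖w p‖^2) (P₁.prod P₂) := by
            simpa only [hw] using hvarint.const_mul (c^2)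
          rw [integral_add i1 i2, integral_add hA2prod i3]
      _ = ∫ x, ‖A x‖^2 ∂P₁ + c^2 * ∫ p, ‖w p‖^2 ∂(P₁.prod P₂) := by
          rw [hA2int_eq, integral_const_mul, integral_const_mul, hcross_zero]
          ring
  rw [hsplit]
  -- bound for ∫ ‖A‖²
  have hAbound : ∫ x, ‖A x‖^2 ∂P₁ ≤ (1-c) * ∫ x, ‖m' x - G' x‖^2 ∂P₁
      + (2/c) * ∫ x, ‖G x - G' x‖^2 ∂P₁ + 2*c * ∫ x, ‖h x - G x‖^2 ∂P₁ := by
    have hmono : ∫ x, ‖A x‖^2 ∂P₁ ≤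
        ∫ x, ((1-c)*‖m' x - G' x‖^2 + (2/c)*‖G x - G' x‖^2 + 2*c*‖h x - G x‖^2) ∂P₁ :=
      integral_mono hA2 hAi hApt2
    have j2 : Integrable (fun x => (2/c) * ‖G x - G' x‖^2) P₁ := hint2.const_mul _
    have j3 : Integrable (fun x => 2*c * ‖h x - G x‖^2) P₁ := hint3.const_mul _
    have j4 : Integrable (fun x => (1-c) * ‖m' x - G' x‖^2) P₁ := hint1.const_mul _
    have j1 : Integrable (fun x => (1-c) * ‖m' x - G' x‖^2 + (2/c) * ‖G x - G' x‖^2) P₁ :=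
      j4.add j2
    rw [integral_add j1 j3, integral_add j4 j2,
      integral_const_mul, integral_const_mul, integral_const_mul] at hmono
    exact hmono
  have hvar' : c^2 * ∫ p, ‖w p‖^2 ∂(P₁.prod P₂) ≤ c^2 * σ^2 := by
    apply mul_le_mul_of_nonneg_left _ (sq_nonneg c)
    simpa only [hw] using hvar
  have hce : c^2 * σ^2 = mu^2 * eta^2 * σ^2 := by rw [hc]; ring
  rw [hce] at hvar'
  linarith
end

section
/- Let $m_t$ evolve by the STORM variance-reduced recursion $m_t = (1-\mu\eta^2)(m_{t-1} - g_{t-1}^{\xi_t}) + g_t^{\xi_t}$ with $\mu\eta^2\in(0,1)$, where $g_{t-1}^{\xi_t}, g_t^{\xi_t}$ are stochastic gradients sampled with the same randomness $\xi_t$ satisfying $\mathbb{E}_{\xi_t}[g_{t-1}^{\xi_t}] = h_{t-1}$, $\mathbb{E}_{\xi_t}[g_t^{\xi_t}] = h_t$, with $m_{t-1}, h_{t-1}, h_t$ independent of $\xi_t$, and $\mathbb{E}\|g_{t-1}^{\xi_t} - h_{t-1}\|^2 \le \sigma^2$. Then $\mathbb{E}\|m_t - h_t\|^2 \le (1-\mu\eta^2)\,\mathbb{E}\|m_{t-1}-h_{t-1}\|^2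 + 2\,\mathbb{E}\|g_t^{\xi_t} - g_{t-1}^{\xi_t}\|^2 + 2\mu^2\eta^4\sigma^2$. -/
open MeasureTheory

section Helpers

variable {E : Type*} [NormedAddCommGroup E] [InnerProductSpace ℝ E] [CompleteSpace E]

private lemma sq_norm_add_le' (u v : E) : ‖u + v‖ ^ 2 ≤ 2 * ‖u‖ ^ 2 + 2 * ‖v‖ ^ 2 := by
  have h : ‖u + v‖ ^ 2 ≤ (‖u‖ + ‖v‖) ^ 2 :=
    pow_le_pow_left₀ (norm_nonneg _) (norm_add_le u v) 2
  nlinarith [sq_nonneg (‖u‖ - ‖v‖)]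

private lemma var_le_moment {Ω : Type*} [MeasurableSpace Ω] (ν : Measure Ω)
    [IsProbabilityMeasure ν]
    {Z : Ω → E} (hZ : Integrable Z ν) (hZ2 : Integrable (fun x => ‖Z x‖ ^ 2) ν) :
    ∫ x, ‖Z x - ∫ y, Z y ∂ν‖ ^ 2 ∂ν ≤ ∫ x, ‖Z x‖ ^ 2 ∂ν := by
  set c := ∫ y, Z y ∂ν with hc
  have hexp : (fun x => ‖Z x - c‖ ^ 2)
      = fun x => ‖Z x‖ ^ 2 - 2 * (inner ℝ (Z x) c : ℝ) + ‖c‖ ^ 2 := by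
    funext x; exact norm_sub_sq_real _ _
  have i0 : Integrable (fun x => 2 * (inner ℝ (Z x) c : ℝ)) ν := (hZ.inner_const c).const_mul 2
  have i1 : Integrable (fun x => ‖Z x‖ ^ 2 - 2 * (inner ℝ (Z x) c : ℝ)) ν := hZ2.sub i0
  have hin : ∫ x, (inner ℝ (Z x) c : ℝ) ∂ν = ‖c‖ ^ 2 := by
    have hcomm : ∀ x, (inner ℝ (Z x) c : ℝ) = inner ℝ c (Z x) := fun x => real_inner_comm _ _
    simp_rw [hcomm]
    rw [integral_inner hZ c, ← hc, real_inner_self_eq_norm_sq]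
  rw [hexp, integral_add i1 (integrable_const _), integral_sub hZ2 i0, integral_const_mul,
    hin, integral_const, probReal_univ, one_smul]
  nlinarith [sq_nonneg ‖c‖]

private lemma integrable_comp_fst' {Ω₁ Ω₂ : Type*} [MeasurableSpace Ω₁] [MeasurableSpace Ω₂]
    {F : Type*} [NormedAddCommGroup F]
    {P₁ : Measure Ω₁} {P₂ : Measure Ω₂} [SFinite P₁] [IsProbabilityMeasure P₂]
    {f : Ω₁ → F} (hf : Integrable f P₁) :
    Integrable (fun p : Ω₁ × Ω₂ => f p.1) (P₁.prod P₂) := by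
  have hmap : (P₁.prod P₂).map Prod.fst = P₁ := by
    rw [Measure.map_fst_prod]; simp
  exact (hmap ▸ hf).comp_aemeasurable measurable_fst.aemeasurable

end Helpers

set_option maxHeartbeats 2000000 in
/-- Per-iteration error recursion of the STORM estimator
`m_t = (1−μη²)(m_{t−1} − g_{t−1}^{ξ_t}) + g_t^{ξ_t}`:
`𝔼‖m_t − h_t‖² ≤ (1−μη²)𝔼‖m_{t−1} − h_{t−1}‖² + 2𝔼‖g_t^{ξ_t} − g_{t−1}^{ξ_t}‖² + 2μ²η⁴σ²`.
Independence of `m_{t−1}, h_{t−1}, h_t` from the fresh sample `ξ_t` is modelled by the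
product probability space `Ω₁ × Ω₂` (past on `ω₁`, sample on `ω₂`). -/
theorem stmt14 {Ω₁ Ω₂ : Type*} [MeasurableSpace Ω₁] [MeasurableSpace Ω₂]
    (P₁ : Measure Ω₁) (P₂ : Measure Ω₂)
    [IsProbabilityMeasure P₁] [IsProbabilityMeasure P₂]
    (dd : ℕ) (mu eta σ : ℝ) (h0 : 0 < mu * eta ^ 2) (h1 : mu * eta ^ 2 < 1)
    (m' h' h : Ω₁ → EuclideanSpace ℝ (Fin dd))
    (g' g : Ω₁ × Ω₂ → EuclideanSpace ℝ (Fin dd))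
    (hm'm : Measurable m') (hh'm : Measurable h') (hhm : Measurable h)
    (hg'm : Measurable g') (hgm : Measurable g)
    (hg'int : Integrable g' (P₁.prod P₂)) (hgint : Integrable g (P₁.prod P₂))
    (hunb' : ∀ᵐ ω₁ ∂P₁, ∫ ω₂, g' (ω₁, ω₂) ∂P₂ = h' ω₁)
    (hunb : ∀ᵐ ω₁ ∂P₁, ∫ ω₂, g (ω₁, ω₂) ∂P₂ = h ω₁)
    (hvar : ∫ p, ‖g' p - h' p.1‖ ^ 2 ∂(P₁.prod P₂) ≤ σ ^ 2)
    (hvarint : Integrable (fun p => ‖g' p - h' p.1‖ ^ 2) (P₁.prod P₂))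
    (hint1 : Integrable (fun ω₁ => ‖m' ω₁ - h' ω₁‖ ^ 2) P₁)
    (hint2 : Integrable (fun p : Ω₁ × Ω₂ => ‖g p - g' p‖ ^ 2) (P₁.prod P₂))
    (hint3 : Integrable
      (fun p : Ω₁ × Ω₂ =>
        ‖(1 - mu * eta ^ 2) • (m' p.1 - g' p) + g p - h p.1‖ ^ 2) (P₁.prod P₂)) :
    ∫ p, ‖(1 - mu * eta ^ 2) • (m' p.1 - g' p) + g p - h p.1‖ ^ 2 ∂(P₁.prod P₂) ≤
      (1 - mu * eta ^ 2) * ∫ ω₁, ‖m' ω₁ - h' ω₁‖ ^ 2 ∂P₁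
        + 2 * ∫ p, ‖g p - g' p‖ ^ 2 ∂(P₁.prod P₂)
        + 2 * mu ^ 2 * eta ^ 4 * σ ^ 2 := by
  set b := mu * eta ^ 2 with hbdef
  set a := 1 - b with hadef
  have ha0 : 0 ≤ a := by rw [hadef]; linarith
  have ha1 : a ≤ 1 := by rw [hadef]; linarith
  set X : Ω₁ → EuclideanSpace ℝ (Fin dd) := fun ω₁ => m' ω₁ - h' ω₁ with hXdef
  set R : Ω₁ × Ω₂ → EuclideanSpace ℝ (Fin dd) :=
    fun p => a • (h' p.1 - g' p) + (g p - h p.1) with hRdef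
  -- rewrite the main quantity
  have key : (fun p : Ω₁ × Ω₂ => ‖a • (m' p.1 - g' p) + g p - h p.1‖ ^ 2)
      = fun p => ‖a • X p.1 + R p‖ ^ 2 := by
    funext p
    have hv : a • (m' p.1 - g' p) + g p - h p.1 = a • X p.1 + R p := by
      simp only [hXdef, hRdef]
      module
    rw [hv]
  rw [key] at hint3
  -- measurability
  have hXme : Measurable X := hm'm.sub hh'm
  have hRme : Measurable R :=
    (((hh'm.comp measurable_fst).sub hg'm).const_smul a).add
      (hgm.sub (hhm.comp measurable_fst))
  -- basic integrability
  have hIh' : Integrable h' P₁ := hg'int.integral_prod_left.congr hunb'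
  have hIh : Integrable h P₁ := hgint.integral_prod_left.congr hunb
  have hh'p : Integrable (fun p : Ω₁ × Ω₂ => h' p.1) (P₁.prod P₂) := integrable_comp_fst' hIh'
  have hhp : Integrable (fun p : Ω₁ × Ω₂ => h p.1) (P₁.prod P₂) := integrable_comp_fst' hIh
  have hRint : Integrable R (P₁.prod P₂) := by
    exact ((hh'p.sub hg'int).smul a).add (hgint.sub hhp)
  have hX2p : Integrable (fun p : Ω₁ × Ω₂ => ‖X p.1‖ ^ 2) (P₁.prod P₂) :=
    integrable_comp_fst' hint1
  -- integrability of ‖R‖²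
  have hR2 : Integrable (fun p : Ω₁ × Ω₂ => ‖R p‖ ^ 2) (P₁.prod P₂) := by
    have ibnd : Integrable
        (fun p : Ω₁ × Ω₂ => 2 * ‖a • X p.1 + R p‖ ^ 2 + 2 * a ^ 2 * ‖X p.1‖ ^ 2)
        (P₁.prod P₂) := by exact (hint3.const_mul 2).add (hX2p.const_mul (2 * a ^ 2))
    refine Integrable.mono' ibnd
      ((hRme.norm.pow_const 2).aestronglyMeasurable) (Filter.Eventually.of_forall fun p => ?_)
    have h2 := sq_norm_add_le' (a • X p.1 + R p) (-(a • X p.1))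
    rw [show a • X p.1 + R p + -(a • X p.1) = R p by abel, norm_neg] at h2
    have h3 : ‖a • X p.1‖ ^ 2 = a ^ 2 * ‖X p.1‖ ^ 2 := by
      rw [norm_smul, mul_pow, Real.norm_eq_abs, sq_abs]
    rw [Real.norm_eq_abs, abs_of_nonneg (by positivity)]
    nlinarith [sq_nonneg ‖X p.1‖]
  -- cross term is integrable and zero
  have hIme : Measurable (fun p : Ω₁ × Ω₂ => (inner ℝ (X p.1) (R p) : ℝ)) :=
    (hXme.comp measurable_fst).inner hRme
  have hIint : Integrable (fun p : Ω₁ × Ω₂ => (inner ℝ (X p.1) (R p) : ℝ)) (P₁.prod P₂) := by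
    have ibnd : Integrable (fun p : Ω₁ × Ω₂ => 1/2 * (‖X p.1‖ ^ 2 + ‖R p‖ ^ 2))
        (P₁.prod P₂) := by exact (hX2p.add hR2).const_mul (1/2)
    refine Integrable.mono' ibnd
      hIme.aestronglyMeasurable (Filter.Eventually.of_forall fun p => ?_)
    have h4 : |(inner ℝ (X p.1) (R p) : ℝ)| ≤ ‖X p.1‖ * ‖R p‖ := abs_real_inner_le_norm _ _
    rw [Real.norm_eq_abs]
    nlinarith [sq_nonneg (‖X p.1‖ - ‖R p‖)]
  have hIzero : ∫ p, (inner ℝ (X p.1) (R p) : ℝ) ∂(P₁.prod P₂) = 0 := by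
    rw [integral_prod _ hIint]
    have hae : ∀ᵐ ω₁ ∂P₁, ∫ ω₂, (inner ℝ (X ω₁) (R (ω₁, ω₂)) : ℝ) ∂P₂ = 0 := by
      filter_upwards [hunb, hunb', hRint.prod_right_ae, hgint.prod_right_ae,
        hg'int.prod_right_ae] with ω₁ e1 e2 iR ig ig'
      have hRfib : ∫ ω₂, R (ω₁, ω₂) ∂P₂ = 0 := by
        have hfun : (fun ω₂ => R (ω₁, ω₂))
            = fun ω₂ => a • (h' ω₁ - g' (ω₁, ω₂)) + (g (ω₁, ω₂) - h ω₁) := by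
          funext ω₂; simp [hRdef]
        have ia : Integrable (fun ω₂ => a • (h' ω₁ - g' (ω₁, ω₂))) P₂ := by
          exact ((integrable_const _).sub ig').smul a
        have ib : Integrable (fun ω₂ => g (ω₁, ω₂) - h ω₁) P₂ := by
          exact ig.sub (integrable_const _)
        rw [hfun, integral_add ia ib, integral_smul, integral_sub (integrable_const _) ig',
          integral_sub ig (integrable_const _), integral_const, probReal_univ,
          one_smul, e1, e2]
        simp
      rw [integral_inner iR (X ω₁), hRfib, inner_zero_right]
    rw [integral_congr_ae hae, integral_zero]
  -- expansion of the square
  have hexp : (fun p : Ω₁ × Ω₂ => ‖a • X p.1 + R p‖ ^ 2)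
      = fun p => a ^ 2 * ‖X p.1‖ ^ 2 + 2 * a * (inner ℝ (X p.1) (R p) : ℝ) + ‖R p‖ ^ 2 := by
    funext p
    rw [norm_add_sq_real, norm_smul, real_inner_smul_left, Real.norm_eq_abs, mul_pow, sq_abs]
    ring
  have hfst : ∫ p, ‖X p.1‖ ^ 2 ∂(P₁.prod P₂) = ∫ ω₁, ‖X ω₁‖ ^ 2 ∂P₁ := by
    have hmap : (P₁.prod P₂).map Prod.fst = P₁ := by rw [Measure.map_fst_prod]; simp
    conv_rhs => rw [← hmap]
    exact (integral_map measurable_fst.aemeasurable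
      ((hXme.norm.pow_const 2).aestronglyMeasurable)).symm
  have hsplit : ∫ p, ‖a • X p.1 + R p‖ ^ 2 ∂(P₁.prod P₂)
      = a ^ 2 * ∫ ω₁, ‖X ω₁‖ ^ 2 ∂P₁ + ∫ p, ‖R p‖ ^ 2 ∂(P₁.prod P₂) := by
    have iC1 : Integrable
        (fun p : Ω₁ × Ω₂ => a ^ 2 * ‖X p.1‖ ^ 2 + 2 * a * (inner ℝ (X p.1) (R p) : ℝ))
        (P₁.prod P₂) := by exact (hX2p.const_mul (a ^ 2)).add (hIint.const_mul (2 * a))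
    rw [hexp, integral_add iC1 hR2,
      integral_add (hX2p.const_mul (a ^ 2)) (hIint.const_mul (2 * a)),
      integral_const_mul, integral_const_mul, hIzero, hfst]
    ring
  -- bound on ∫‖R‖²
  have hRST : ∀ p : Ω₁ × Ω₂,
      R p = ((g p - g' p) + (h' p.1 - h p.1)) + b • (g' p - h' p.1) := by
    intro p
    simp only [hRdef, hadef]
    module
  have hS2 : Integrable (fun p : Ω₁ × Ω₂ => ‖(g p - g' p) + (h' p.1 - h p.1)‖ ^ 2)
      (P₁.prod P₂) := by
    have hSme : Measurable (fun p : Ω₁ × Ω₂ => (g p - g' p) + (h' p.1 - h p.1)) :=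
      (hgm.sub hg'm).add ((hh'm.comp measurable_fst).sub (hhm.comp measurable_fst))
    have ibnd : Integrable
        (fun p : Ω₁ × Ω₂ => 2 * ‖R p‖ ^ 2 + 2 * b ^ 2 * ‖g' p - h' p.1‖ ^ 2)
        (P₁.prod P₂) := by exact (hR2.const_mul 2).add (hvarint.const_mul (2 * b ^ 2))
    refine Integrable.mono' ibnd
      ((hSme.norm.pow_const 2).aestronglyMeasurable) (Filter.Eventually.of_forall fun p => ?_)
    have h2 := sq_norm_add_le' (R p) (-(b • (g' p - h' p.1)))
    rw [show R p + -(b • (g' p - h' p.1)) = (g p - g' p) + (h' p.1 - h p.1) by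
      rw [hRST p]; abel, norm_neg] at h2
    have h3 : ‖b • (g' p - h' p.1)‖ ^ 2 = b ^ 2 * ‖g' p - h' p.1‖ ^ 2 := by
      rw [norm_smul, mul_pow, Real.norm_eq_abs, sq_abs]
    rw [Real.norm_eq_abs, abs_of_nonneg (by positivity)]
    nlinarith [sq_nonneg ‖g' p - h' p.1‖]
  have hS2le : ∫ p, ‖(g p - g' p) + (h' p.1 - h p.1)‖ ^ 2 ∂(P₁.prod P₂)
      ≤ ∫ p, ‖g p - g' p‖ ^ 2 ∂(P₁.prod P₂) := by
    rw [integral_prod _ hS2, integral_prod _ hint2]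
    refine integral_mono_ae hS2.integral_prod_left hint2.integral_prod_left ?_
    filter_upwards [hunb, hunb', hint2.prod_right_ae, hgint.prod_right_ae,
      hg'int.prod_right_ae] with ω₁ e1 e2 i2 ig ig'
    have hZ : Integrable (fun ω₂ => g (ω₁, ω₂) - g' (ω₁, ω₂)) P₂ := ig.sub ig'
    have hmean : ∫ ω₂, (g (ω₁, ω₂) - g' (ω₁, ω₂)) ∂P₂ = h ω₁ - h' ω₁ := by
      rw [integral_sub ig ig', e1, e2]
    have hv := var_le_moment P₂ hZ i2
    rw [hmean] at hv
    have heq : ∀ ω₂, (g (ω₁, ω₂) - g' (ω₁, ω₂)) + (h' ω₁ - h ω₁)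
        = (g (ω₁, ω₂) - g' (ω₁, ω₂)) - (h ω₁ - h' ω₁) := by intro ω₂; abel
    simp_rw [heq]
    exact hv
  have hb2 : b ^ 2 = mu ^ 2 * eta ^ 4 := by rw [hbdef]; ring
  have hRb : ∫ p, ‖R p‖ ^ 2 ∂(P₁.prod P₂)
      ≤ 2 * ∫ p, ‖g p - g' p‖ ^ 2 ∂(P₁.prod P₂) + 2 * b ^ 2 * σ ^ 2 := by
    have pt : ∀ p : Ω₁ × Ω₂, ‖R p‖ ^ 2
        ≤ 2 * ‖(g p - g' p) + (h' p.1 - h p.1)‖ ^ 2 + 2 * b ^ 2 * ‖g' p - h' p.1‖ ^ 2 := by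
      intro p
      have h2 := sq_norm_add_le' ((g p - g' p) + (h' p.1 - h p.1)) (b • (g' p - h' p.1))
      rw [← hRST p] at h2
      have h3 : ‖b • (g' p - h' p.1)‖ ^ 2 = b ^ 2 * ‖g' p - h' p.1‖ ^ 2 := by
        rw [norm_smul, mul_pow, Real.norm_eq_abs, sq_abs]
      nlinarith []
    have iD : Integrable
        (fun p : Ω₁ × Ω₂ => 2 * ‖(g p - g' p) + (h' p.1 - h p.1)‖ ^ 2
          + 2 * b ^ 2 * ‖g' p - h' p.1‖ ^ 2) (P₁.prod P₂) := by
      exact (hS2.const_mul 2).add (hvarint.const_mul (2 * b ^ 2))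
    calc ∫ p, ‖R p‖ ^ 2 ∂(P₁.prod P₂)
        ≤ ∫ p, (2 * ‖(g p - g' p) + (h' p.1 - h p.1)‖ ^ 2
            + 2 * b ^ 2 * ‖g' p - h' p.1‖ ^ 2) ∂(P₁.prod P₂) :=
          integral_mono hR2 iD pt
      _ = 2 * ∫ p, ‖(g p - g' p) + (h' p.1 - h p.1)‖ ^ 2 ∂(P₁.prod P₂)
            + 2 * b ^ 2 * ∫ p, ‖g' p - h' p.1‖ ^ 2 ∂(P₁.prod P₂) := by
          rw [integral_add (hS2.const_mul 2) (hvarint.const_mul (2 * b ^ 2)),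
            integral_const_mul, integral_const_mul]
      _ ≤ 2 * ∫ p, ‖g p - g' p‖ ^ 2 ∂(P₁.prod P₂) + 2 * b ^ 2 * σ ^ 2 := by
          have hbb : (0:ℝ) ≤ 2 * b ^ 2 := by positivity
          have h5 := mul_le_mul_of_nonneg_left hvar hbb
          linarith
  -- finish
  have hXA : 0 ≤ ∫ ω₁, ‖X ω₁‖ ^ 2 ∂P₁ := integral_nonneg fun ω₁ => by positivity
  rw [key, hsplit]
  have haa : a ^ 2 * ∫ ω₁, ‖X ω₁‖ ^ 2 ∂P₁ ≤ a * ∫ ω₁, ‖X ω₁‖ ^ 2 ∂P₁ := by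
    nlinarith [mul_nonneg (mul_nonneg ha0 (sub_nonneg.2 ha1)) hXA]
  rw [hb2] at hRb
  linarith
end

section
/- Let $W\in\mathbb{R}^{N\times N}$ be symmetric doubly stochastic with second largest eigenvalue modulus $\lambda<1$, and consider the gradient-tracking recursion $Y_{t+1} = Y_t W + M_{t+1} - M_t$ (column-wise: $y_{n,t+1} = \sum_{n'} w_{nn'} y_{n',t} + m_{n,t+1} - m_{n,t}$). Then $\|Y_{t+1} - \bar{Y}_{t+1}\|_F^2 \le \lambda\,\|Y_t - \bar{Y}_t\|_F^2 + \frac{1}{1-\lambda}\,\|M_{t+1}-M_t\|_F^2$. -/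
open Finset

/-- Frobenius norm of a real matrix. -/
noncomputable def frobNorm {m n : Type*} [Fintype m] [Fintype n] (X : Matrix m n ℝ) : ℝ :=
  Real.sqrt (∑ i, ∑ j, (X i j) ^ 2)

/-- Column-averaging: `X̄ = X · (1/N) 𝟙𝟙ᵀ`. -/
noncomputable def colAvg {dd N : ℕ} (X : Matrix (Fin dd) (Fin N) ℝ) : Matrix (Fin dd) (Fin N) ℝ :=
  X * Matrix.of (fun _ _ => (N : ℝ)⁻¹)

namespace Stmt15Aux

noncomputable def toE {dd N : ℕ} (X : Matrix (Fin dd) (Fin N) ℝ) :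
    EuclideanSpace ℝ (Fin dd × Fin N) :=
  (WithLp.equiv 2 _).symm (fun p => X p.1 p.2)

lemma toE_add {dd N : ℕ} (A B : Matrix (Fin dd) (Fin N) ℝ) :
    toE (A + B) = toE A + toE B := by
  rfl

lemma frob_eq_norm {dd N : ℕ} (X : Matrix (Fin dd) (Fin N) ℝ) :
    frobNorm X = ‖toE X‖ := by
  rw [EuclideanSpace.norm_eq, frobNorm]
  congr 1
  rw [Fintype.sum_prod_type]
  exact Finset.sum_congr rfl fun i _ => Finset.sum_congr rfl fun j _ => by
    rw [Real.norm_eq_abs, sq_abs]; rfl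

lemma frob_nonneg {dd N : ℕ} (X : Matrix (Fin dd) (Fin N) ℝ) : 0 ≤ frobNorm X :=
  Real.sqrt_nonneg _

lemma frob_sq {dd N : ℕ} (X : Matrix (Fin dd) (Fin N) ℝ) :
    frobNorm X ^ 2 = ∑ i, ∑ j, (X i j) ^ 2 := by
  rw [frobNorm, Real.sq_sqrt]
  exact Finset.sum_nonneg fun i _ => Finset.sum_nonneg fun j _ => sq_nonneg _

lemma frob_triangle {dd N : ℕ} (A B : Matrix (Fin dd) (Fin N) ℝ) :
    frobNorm (A + B) ≤ frobNorm A + frobNorm B := by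
  rw [frob_eq_norm, frob_eq_norm, frob_eq_norm, toE_add]
  exact norm_add_le _ _

lemma repr_mulVec {N : ℕ} (W : Matrix (Fin N) (Fin N) ℝ) (hHerm : W.IsHermitian)
    (x : EuclideanSpace ℝ (Fin N)) (i : Fin N) :
    hHerm.eigenvectorBasis.repr ((WithLp.equiv 2 _).symm (W.mulVec x)) i
      = hHerm.eigenvalues i * hHerm.eigenvectorBasis.repr x i := by
  rw [OrthonormalBasis.repr_apply_apply, OrthonormalBasis.repr_apply_apply]
  have hsym : ∀ a b : EuclideanSpace ℝ (Fin N),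
      inner ℝ ((WithLp.equiv 2 _).symm (W.mulVec a)) b
        = (inner ℝ a ((WithLp.equiv 2 _).symm (W.mulVec b)) : ℝ) := by
    intro a b
    simp only [PiLp.inner_apply, RCLike.inner_apply, conj_trivial]
    simp only [WithLp.equiv_symm_apply, PiLp.toLp_apply, Matrix.mulVec, dotProduct]
    conv_lhs => enter [2, x]; rw [mul_comm]
    conv_rhs => enter [2, x]; rw [mul_comm]
    have hW : ∀ j k, W j k = W k j := fun j k => by
      have := hHerm.apply j k; simpa using this.symm
    calc ∑ j, (∑ k, W j k * a k) * b j = ∑ j, ∑ k, W j k * a k * b j := by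
            simp [Finset.sum_mul]
      _ = ∑ k, ∑ j, W j k * a k * b j := Finset.sum_comm
      _ = ∑ k, a k * ∑ j, W k j * b j := by
            refine Finset.sum_congr rfl fun k _ => ?_
            rw [Finset.mul_sum]
            exact Finset.sum_congr rfl fun j _ => by rw [hW j k]; ring
  have h1 : (inner ℝ ((WithLp.equiv 2 _).symm (W.mulVec ⇑(hHerm.eigenvectorBasis i))) x : ℝ)
      = hHerm.eigenvalues i * inner ℝ (hHerm.eigenvectorBasis i) x := by
    rw [hHerm.mulVec_eigenvectorBasis]
    simp [PiLp.inner_apply, Finset.mul_sum, mul_assoc]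
    exact Finset.sum_congr rfl fun _ _ => by ring
  rw [← h1, ← hsym]

lemma specBound {N : ℕ} (W : Matrix (Fin N) (Fin N) ℝ) (hHerm : W.IsHermitian)
    (hrow : ∀ i, ∑ j, W i j = 1)
    (lam : ℝ) (hlam1 : lam < 1) (i₀ : Fin N)
    (heig : ∀ i, i ≠ i₀ → |hHerm.eigenvalues i| ≤ lam)
    (x : Fin N → ℝ) (hx : ∑ j, x j = 0) :
    ∑ j, (W.mulVec x j) ^ 2 ≤ lam ^ 2 * ∑ j, (x j) ^ 2 := by
  set B := hHerm.eigenvectorBasis with hB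
  set e := hHerm.eigenvalues with he
  set ι : (Fin N → ℝ) → EuclideanSpace ℝ (Fin N) :=
    fun v => (WithLp.equiv 2 (Fin N → ℝ)).symm v with hι
  have hip : ∀ v w : EuclideanSpace ℝ (Fin N), (inner ℝ v w : ℝ) = ∑ i, v i * w i := by
    intro v w
    simp [PiLp.inner_apply, RCLike.inner_apply, mul_comm]
  have hinner : ∀ a b : Fin N → ℝ, (inner ℝ (ι a) (ι b) : ℝ) = ∑ j, a j * b j := by
    intro a b
    rw [hip]
    rfl
  -- the all-ones vector is fixed by W
  have hu : W.mulVec (fun _ => 1) = (fun _ => 1) := by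
    funext j
    simp [Matrix.mulVec, dotProduct, hrow j]
  -- repr of the ones vector vanishes off i₀
  have hones : ∀ i, i ≠ i₀ → B.repr (ι fun _ => 1) i = 0 := by
    intro i hi
    have h1 := repr_mulVec W hHerm (ι fun _ => 1) i
    rw [show (W.mulVec (ι fun _ => 1) : Fin N → ℝ) = W.mulVec (fun _ => 1) from rfl, hu] at h1
    have h2 : B.repr (ι fun _ => 1) i = e i * B.repr (ι fun _ => 1) i := h1
    have hei : e i ≠ 1 := by
      have := heig i hi
      have : e i ≤ lam := le_trans (le_abs_self _) this
      linarith
    have : (1 - e i) * B.repr (ι fun _ => 1) i = 0 := by linarith [h2]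
    rcases mul_eq_zero.1 this with h | h
    · exact absurd (by linarith : e i = 1) hei
    · exact h
  -- repr of x vanishes at i₀
  have hx0 : B.repr (ι x) i₀ = 0 := by
    have hpar : (inner ℝ (B.repr (ι fun _ => 1)) (B.repr (ι x)) : ℝ)
        = inner ℝ (ι fun _ => 1) (ι x) := B.repr.inner_map_map _ _
    have hz : (inner ℝ (ι fun _ => 1) (ι x) : ℝ) = 0 := by
      rw [hinner]; simpa using hx
    rw [hz, hip] at hpar
    have hsum : ∑ i, B.repr (ι fun _ => 1) i * B.repr (ι x) i = 0 := hpar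
    rw [Finset.sum_eq_single i₀ (fun i _ hi => by rw [hones i hi, zero_mul])
      (fun h => absurd (Finset.mem_univ i₀) h)] at hsum
    have hu0 : B.repr (ι fun _ => 1) i₀ ≠ 0 := by
      intro h0
      have : B.repr (ι fun _ => 1) = 0 := by
        ext i
        by_cases hi : i = i₀
        · rw [hi]; exact h0
        · exact hones i hi
      have : (ι fun _ => 1) = 0 := by
        have := congrArg B.repr.symm this
        simpa using this
      have := congrArg (fun v => v i₀) this
      simpa [hι, WithLp.equiv_symm_apply] using this
    exact (mul_eq_zero.1 hsum).resolve_left hu0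
  -- conclude
  have hlhs : ∑ j, (W.mulVec x j) ^ 2 = ∑ i, (e i * B.repr (ι x) i) ^ 2 := by
    have h1 : (∑ j, W.mulVec x j * W.mulVec x j)
        = (inner ℝ (ι (W.mulVec x)) (ι (W.mulVec x)) : ℝ) := (hinner _ _).symm
    have h2 : (inner ℝ (ι (W.mulVec x)) (ι (W.mulVec x)) : ℝ)
        = inner ℝ (B.repr (ι (W.mulVec x))) (B.repr (ι (W.mulVec x))) :=
      (B.repr.inner_map_map _ _).symm
    have h3 : ∀ i, B.repr (ι (W.mulVec x)) i = e i * B.repr (ι x) i := fun i =>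
      repr_mulVec W hHerm (ι x) i
    calc ∑ j, (W.mulVec x j) ^ 2 = ∑ j, W.mulVec x j * W.mulVec x j := by
          simp [sq]
      _ = inner ℝ (B.repr (ι (W.mulVec x))) (B.repr (ι (W.mulVec x))) := by rw [h1, h2]
      _ = ∑ i, B.repr (ι (W.mulVec x)) i * B.repr (ι (W.mulVec x)) i := hip _ _
      _ = ∑ i, (e i * B.repr (ι x) i) ^ 2 := by
          exact Finset.sum_congr rfl fun i _ => by rw [h3 i]; ring
  have hrhs : ∑ j, (x j) ^ 2 = ∑ i, (B.repr (ι x) i) ^ 2 := by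
    have h1 : (∑ j, x j * x j) = (inner ℝ (ι x) (ι x) : ℝ) := (hinner _ _).symm
    have h2 : (inner ℝ (ι x) (ι x) : ℝ)
        = inner ℝ (B.repr (ι x)) (B.repr (ι x)) := (B.repr.inner_map_map _ _).symm
    calc ∑ j, (x j) ^ 2 = ∑ j, x j * x j := by simp [sq]
      _ = inner ℝ (B.repr (ι x)) (B.repr (ι x)) := by rw [h1, h2]
      _ = ∑ i, B.repr (ι x) i * B.repr (ι x) i := hip _ _
      _ = ∑ i, (B.repr (ι x) i) ^ 2 := by
          exact Finset.sum_congr rfl fun i _ => (sq _).symm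
  rw [hlhs, hrhs, Finset.mul_sum]
  refine Finset.sum_le_sum fun i _ => ?_
  by_cases hi : i = i₀
  · rw [hi, hx0]
    simp [sq_nonneg, mul_nonneg (sq_nonneg lam) (sq_nonneg _)]
  · have := heig i hi
    have h1 : (e i) ^ 2 ≤ lam ^ 2 := by
      have := abs_le.1 this
      nlinarith [this.1, this.2]
    calc (e i * B.repr (ι x) i) ^ 2 = (e i) ^ 2 * (B.repr (ι x) i) ^ 2 := by ring
      _ ≤ lam ^ 2 * (B.repr (ι x) i) ^ 2 := by nlinarith [sq_nonneg (B.repr (ι x) i)]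

lemma colAvg_eq' {dd N : ℕ} (X : Matrix (Fin dd) (Fin N) ℝ) :
    colAvg X = X * (Matrix.of (fun _ _ => (N : ℝ)⁻¹) : Matrix (Fin N) (Fin N) ℝ) := rfl

end Stmt15Aux

set_option maxHeartbeats 1000000 in
open Stmt15Aux in
/-- Consensus-error recursion of the gradient-tracking update
`Y⁺ = YW + M⁺ − M`:
`‖Y⁺ − Ȳ⁺‖_F² ≤ λ‖Y − Ȳ‖_F² + (1/(1−λ))‖M⁺ − M‖_F²`. -/
theorem stmt15 (N : ℕ) (hN : 0 < N) (W : Matrix (Fin N) (Fin N) ℝ)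
    (hHerm : W.IsHermitian)
    (hnonneg : ∀ i j, 0 ≤ W i j)
    (hrow : ∀ i, ∑ j, W i j = 1)
    (hcol : ∀ j, ∑ i, W i j = 1)
    (lam : ℝ) (hlam0 : 0 ≤ lam) (hlam1 : lam < 1)
    (i₀ : Fin N) (heig1 : hHerm.eigenvalues i₀ = 1)
    (heig : ∀ i, i ≠ i₀ → |hHerm.eigenvalues i| ≤ lam)
    (dd : ℕ) (Y M M' : Matrix (Fin dd) (Fin N) ℝ) :
    frobNorm ((Y * W + M' - M) - colAvg (Y * W + M' - M)) ^ 2 ≤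
      lam * frobNorm (Y - colAvg Y) ^ 2 + (1 / (1 - lam)) * frobNorm (M' - M) ^ 2 := by
  classical
  set J : Matrix (Fin N) (Fin N) ℝ := Matrix.of (fun _ _ => (N : ℝ)⁻¹) with hJ
  have hNne : ((N : ℝ)) ≠ 0 := Nat.cast_ne_zero.2 hN.ne'
  have hWJ : W * J = J := by
    ext i j
    simp [hJ, Matrix.mul_apply, ← Finset.sum_mul, hrow i]
  have hJW : J * W = J := by
    ext i j
    simp only [hJ, Matrix.mul_apply, Matrix.of_apply]
    rw [← Finset.mul_sum, hcol j]
    simp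
  set Z := Y - colAvg Y with hZ
  set D := M' - M with hD
  set E := D - colAvg D with hE
  -- decomposition of the consensus error
  have hdecomp : (Y * W + M' - M) - colAvg (Y * W + M' - M) = Z * W + E := by
    simp only [colAvg_eq', hZ, hE, hD]
    rw [← hJ]
    simp only [Matrix.sub_mul, Matrix.add_mul]
    rw [Matrix.mul_assoc Y W J, hWJ, Matrix.mul_assoc Y J W, hJW]
    abel
  -- rows of Z sum to zero
  have hZrow : ∀ i, ∑ j, Z i j = 0 := by
    intro i
    simp only [hZ, Matrix.sub_apply, colAvg_eq', Matrix.mul_apply, Matrix.of_apply]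
    rw [Finset.sum_sub_distrib]
    have : ∑ j : Fin N, ∑ k : Fin N, Y i k * (N : ℝ)⁻¹ = ∑ k, Y i k := by
      rw [Finset.sum_const, Finset.card_univ, Fintype.card_fin, nsmul_eq_mul,
        ← Finset.sum_mul]
      field_simp
    rw [this, sub_self]
  -- spectral bound on Z * W
  have hZW : frobNorm (Z * W) ^ 2 ≤ lam ^ 2 * frobNorm Z ^ 2 := by
    rw [frob_sq, frob_sq, Finset.mul_sum]
    refine Finset.sum_le_sum fun i _ => ?_
    have hrow_eq : ∀ j, (Z * W) i j = W.mulVec (fun k => Z i k) j := by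
      intro j
      simp only [Matrix.mul_apply, Matrix.mulVec, dotProduct]
      exact Finset.sum_congr rfl fun k _ => by
        have : W j k = W k j := by
          have := hHerm.apply j k; simpa using this.symm
        rw [this]; ring
    calc ∑ j, ((Z * W) i j) ^ 2 = ∑ j, (W.mulVec (fun k => Z i k) j) ^ 2 := by
          exact Finset.sum_congr rfl fun j _ => by rw [hrow_eq j]
      _ ≤ lam ^ 2 * ∑ j, (Z i j) ^ 2 :=
          specBound W hHerm hrow lam hlam1 i₀ heig _ (hZrow i)
  -- projection bound on E
  have hED : frobNorm E ^ 2 ≤ frobNorm D ^ 2 := by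
    rw [frob_sq, frob_sq]
    refine Finset.sum_le_sum fun i _ => ?_
    have hform : ∀ j, E i j = D i j - (∑ k, D i k) * (N : ℝ)⁻¹ := by
      intro j
      simp only [hE, Matrix.sub_apply, colAvg_eq', Matrix.mul_apply, Matrix.of_apply,
        ← Finset.sum_mul]
    set s := ∑ k, D i k with hs
    calc ∑ j, (E i j) ^ 2 = ∑ j, ((D i j) ^ 2 - 2 * D i j * (s * (N : ℝ)⁻¹)
            + (s * (N : ℝ)⁻¹) ^ 2) := by
          exact Finset.sum_congr rfl fun j _ => by rw [hform j]; ring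
      _ = (∑ j, (D i j) ^ 2) - 2 * s * (s * (N : ℝ)⁻¹)
            + (N : ℝ) * (s * (N : ℝ)⁻¹) ^ 2 := by
          have hA : ∑ j : Fin N, 2 * D i j * (s * (N : ℝ)⁻¹)
              = 2 * s * (s * (N : ℝ)⁻¹) := by
            rw [← Finset.sum_mul]
            congr 1
            rw [hs, Finset.mul_sum]
          have hB : ∑ _j : Fin N, (s * (N : ℝ)⁻¹) ^ 2
              = (N : ℝ) * (s * (N : ℝ)⁻¹) ^ 2 := by
            simp [Finset.sum_const, Finset.card_univ, nsmul_eq_mul]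
          rw [Finset.sum_add_distrib, Finset.sum_sub_distrib, hA, hB]
      _ = (∑ j, (D i j) ^ 2) - s ^ 2 * (N : ℝ)⁻¹ := by field_simp; ring
      _ ≤ ∑ j, (D i j) ^ 2 := by
          have : 0 ≤ s ^ 2 * (N : ℝ)⁻¹ :=
            mul_nonneg (sq_nonneg _) (inv_nonneg.2 (Nat.cast_nonneg _))
          linarith
  -- assemble
  rw [hdecomp]
  have htri : frobNorm (Z * W + E) ≤ frobNorm (Z * W) + frobNorm E := frob_triangle _ _
  set F := frobNorm (Z * W + E) with hF
  set P := frobNorm (Z * W) with hP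
  set Q := frobNorm E with hQ
  set P0 := frobNorm Z with hP0
  set Q0 := frobNorm D with hQ0
  have hFnn : 0 ≤ F := frob_nonneg _
  have hPnn : 0 ≤ P := frob_nonneg _
  have hQnn : 0 ≤ Q := frob_nonneg _
  have hP0nn : 0 ≤ P0 := frob_nonneg _
  have hQ0nn : 0 ≤ Q0 := frob_nonneg _
  have hPle : P ≤ lam * P0 := by
    have h1 : P ^ 2 ≤ (lam * P0) ^ 2 := by
      calc P ^ 2 ≤ lam ^ 2 * P0 ^ 2 := hZW
        _ = (lam * P0) ^ 2 := by ring
    nlinarith [mul_nonneg hlam0 hP0nn]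
  have hQle : Q ≤ Q0 := by nlinarith [hED]
  have h1lam : 0 < 1 - lam := by linarith
  have key : (lam * P0 + Q0) ^ 2 ≤ lam * P0 ^ 2 + (1 / (1 - lam)) * Q0 ^ 2 := by
    have h3 : lam * P0 ^ 2 + (1 / (1 - lam)) * Q0 ^ 2 - (lam * P0 + Q0) ^ 2
        = (lam * ((1 - lam) * P0 - Q0) ^ 2) / (1 - lam) := by
      field_simp
      ring
    have h4 : 0 ≤ (lam * ((1 - lam) * P0 - Q0) ^ 2) / (1 - lam) :=
      div_nonneg (mul_nonneg hlam0 (sq_nonneg _)) h1lam.le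
    linarith
  calc F ^ 2 ≤ (lam * P0 + Q0) ^ 2 := by nlinarith [htri, hPle, hQle]
    _ ≤ _ := key
end
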